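/- (Generalized front-door with information function) Consider the front-door DAG D → A, D → B, A → C, C → B and a generalized info intervention that replaces the input of C by e_{AC} = g(x_A) for a given function g. Then P(x_B | σ(F)) = Σ_{x_C} Σ_{x_A} P(x_C | g(x_A)) P(x_B | x_C, x_A) P(x_A). -/
import Mathlib


open Finset

private lemma sum3_comm {β γ δ : Type*} [Fintype β] [Fintype γ] [Fintype δ]
    (f : β → γ → δ → ℝ) :
    ∑ b, ∑ c, ∑ d, f b c d = ∑ d, ∑ c, ∑ b, f b c d := by
  rw [Finset.sum_comm]
  rw [show (∑ d, ∑ c, ∑ b, f b c d) = ∑ c, ∑ d, ∑ b, f b c d from Finset.sum_comm]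
  exact Finset.sum_congr rfl fun c _ => Finset.sum_comm

/-- Joint distribution of the front-door DAG `D → A`, `D → B`, `A → C`, `C → B`:
`P(a,b,c,d) = P(d) P(a|d) P(c|a) P(b|c,d)`. -/
noncomputable def frontJoint {α β γ δ : Type*} (pD : δ → ℝ) (pA : δ → α → ℝ)
    (pC : α → γ → ℝ) (pB : γ → δ → β → ℝ) (a : α) (b : β) (c : γ) (d : δ) : ℝ :=
  pD d * pA d a * pC a c * pB c d b

/-- Generalized front-door with information function. In the front-door
DAG `D → A, D → B, A → C, C → B`, for the generalized info intervention replacing the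
input of `C` by `e_{AC} = g(x_A)`, the intervention distribution
`P(x | σ(F)) = P(x_D) P(x_A|x_D) P(x_C | g(x_A)) P(x_B | x_C, x_D)` satisfies
`P(x_B | σ(F)) = Σ_{x_C} Σ_{x_A} P(x_C | g(x_A)) P(x_B | x_C, x_A) P(x_A)`, where the
right-hand conditionals and marginals are ratios/sums of the observational joint. -/
theorem generalized_front_door {α β γ δ : Type*} [Fintype α] [Fintype β] [Fintype γ]
    [Fintype δ]
    (pD : δ → ℝ) (pA : δ → α → ℝ) (pC : α → γ → ℝ) (pB : γ → δ → β → ℝ) (g : α → α)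
    (hpD0 : ∀ d, 0 ≤ pD d) (hpA0 : ∀ d a, 0 ≤ pA d a)
    (hpC0 : ∀ a c, 0 ≤ pC a c) (hpB0 : ∀ c d b, 0 ≤ pB c d b)
    (hpD1 : ∑ d, pD d = 1) (hpA1 : ∀ d, ∑ a, pA d a = 1)
    (hpC1 : ∀ a, ∑ c, pC a c = 1) (hpB1 : ∀ c d, ∑ b, pB c d b = 1)
    (xb : β)
    (hposA : ∀ a, 0 < ∑ b, ∑ c, ∑ d, frontJoint pD pA pC pB a b c d)    -- P(x_A) > 0
    (hposAC : ∀ a c, 0 < ∑ b, ∑ d, frontJoint pD pA pC pB a b c d) :    -- P(x_A,x_C) > 0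
    -- P(x_B | σ(F))  (marginal of the generalized info-intervention distribution)
    (∑ a, ∑ c, ∑ d, pD d * pA d a * pC (g a) c * pB c d xb)
      = ∑ c, ∑ a,
          ((∑ b, ∑ d, frontJoint pD pA pC pB (g a) b c d)
            / (∑ b, ∑ c, ∑ d, frontJoint pD pA pC pB (g a) b c d))      -- P(x_C | g(x_A))
          * ((∑ d, frontJoint pD pA pC pB a xb c d)
              / (∑ b, ∑ d, frontJoint pD pA pC pB a b c d))             -- P(x_B | x_C,x_A)
          * (∑ b, ∑ c, ∑ d, frontJoint pD pA pC pB a b c d)             -- P(x_A)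
      := by
  classical
  set q : α → ℝ := fun a => ∑ d, pD d * pA d a with hq
  have L1 : ∀ a, (∑ b, ∑ c, ∑ d, frontJoint pD pA pC pB a b c d) = q a := by
    intro a
    rw [sum3_comm]
    simp only [frontJoint, mul_assoc, ← Finset.mul_sum, hpB1, hpC1, mul_one, hq]
  have L2 : ∀ a c, (∑ b, ∑ d, frontJoint pD pA pC pB a b c d) = pC a c * q a := by
    intro a c
    rw [Finset.sum_comm]
    simp only [frontJoint, mul_assoc, ← Finset.mul_sum, hpB1, mul_one, hq]
    rw [Finset.mul_sum]
    exact Finset.sum_congr rfl fun d _ => by ring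
  have L3 : ∀ a c, (∑ d, frontJoint pD pA pC pB a xb c d)
      = pC a c * ∑ d, pD d * pA d a * pB c d xb := by
    intro a c
    simp only [frontJoint, Finset.mul_sum]
    exact Finset.sum_congr rfl fun d _ => by ring
  have hqpos : ∀ a, 0 < q a := fun a => (L1 a) ▸ hposA a
  have hpCpos : ∀ a c, 0 < pC a c := by
    intro a c
    have h := hposAC a c
    rw [L2] at h
    rcases (hpC0 a c).lt_or_eq with h' | h'
    · exact h'
    · exfalso; rw [← h'] at h; simp at h
  rw [Finset.sum_comm]
  refine Finset.sum_congr rfl fun c _ => Finset.sum_congr rfl fun a _ => ?_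
  rw [L1 (g a), L1 a, L2 (g a) c, L2 a c, L3 a c]
  have h1 : q (g a) ≠ 0 := (hqpos (g a)).ne'
  have h2 : pC a c ≠ 0 := (hpCpos a c).ne'
  have h3 : q a ≠ 0 := (hqpos a).ne'
  rw [mul_div_assoc, div_self h1, mul_one, mul_div_mul_left _ _ h2,
    mul_assoc, div_mul_cancel₀ _ h3, Finset.mul_sum]
  exact Finset.sum_congr rfl fun d _ => by ring
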